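/- arXiv:2401.01084 — 3 statements merged into one kernel-verified Lean document; each statement's English description precedes it below -/
import Mathlib

section
/- Let (Λ_t)_{t=1}^{T} be nonnegative real numbers and C₁, C₂ ≥ 0 such that Λ_{t+1} ≤ (1 − 2β_t/τ₀) Λ_t + C₁ β_t^{3/2} + C₂ β_t^{1/2} holds for every integer t with 1 ≤ t ≤ T−1, where T ≥ 1 is an integer. Then Λ_T ≤ τ₀² Λ_1/(T+τ₀−1)² + (2/3) C₁ τ₀^{3/2} (T+τ₀)^{3/2}/(T+τ₀−1)² + (2/5) C₂ τ₀^{1/2} (T+τ₀)^{5/2}/(T+τ₀−1)². -/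
open Real

-- key increment lemmas
lemma key32 (a : ℝ) (ha : 0 ≤ a) :
    a ^ ((1:ℝ)/2) ≤ (2/3) * ((a+1) ^ ((3:ℝ)/2) - a ^ ((3:ℝ)/2)) := by
  have ha1 : (0:ℝ) ≤ a + 1 := by linarith
  set u := a ^ ((1:ℝ)/2) with hu
  set v := (a+1) ^ ((1:ℝ)/2) with hv
  have hu0 : 0 ≤ u := Real.rpow_nonneg ha _
  have hv0 : 0 ≤ v := Real.rpow_nonneg ha1 _
  have hu2 : u ^ 2 = a := by
    rw [hu, ← Real.rpow_natCast (a ^ ((1:ℝ)/2)) 2, ← Real.rpow_mul ha]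
    norm_num
  have hv2 : v ^ 2 = a + 1 := by
    rw [hv, ← Real.rpow_natCast ((a+1) ^ ((1:ℝ)/2)) 2, ← Real.rpow_mul ha1]
    norm_num
  have hu3 : a ^ ((3:ℝ)/2) = u ^ 3 := by
    rw [hu, ← Real.rpow_natCast (a ^ ((1:ℝ)/2)) 3, ← Real.rpow_mul ha]
    norm_num
  have hv3 : (a+1) ^ ((3:ℝ)/2) = v ^ 3 := by
    rw [hv, ← Real.rpow_natCast ((a+1) ^ ((1:ℝ)/2)) 3, ← Real.rpow_mul ha1]
    norm_num
  have huv : u ≤ v := by nlinarith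
  rw [hu3, hv3]
  nlinarith [mul_nonneg (mul_nonneg (sub_nonneg.2 huv) (sub_nonneg.2 huv)) (by linarith : (0:ℝ) ≤ v + u/2)]

lemma key52 (a : ℝ) (ha : 0 ≤ a) :
    a ^ ((3:ℝ)/2) ≤ (2/5) * ((a+1) ^ ((5:ℝ)/2) - a ^ ((5:ℝ)/2)) := by
  have ha1 : (0:ℝ) ≤ a + 1 := by linarith
  set u := a ^ ((1:ℝ)/2) with hu
  set v := (a+1) ^ ((1:ℝ)/2) with hv
  have hu0 : 0 ≤ u := Real.rpow_nonneg ha _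
  have hv0 : 0 ≤ v := Real.rpow_nonneg ha1 _
  have hu2 : u ^ 2 = a := by
    rw [hu, ← Real.rpow_natCast (a ^ ((1:ℝ)/2)) 2, ← Real.rpow_mul ha]
    norm_num
  have hv2 : v ^ 2 = a + 1 := by
    rw [hv, ← Real.rpow_natCast ((a+1) ^ ((1:ℝ)/2)) 2, ← Real.rpow_mul ha1]
    norm_num
  have hu3 : a ^ ((3:ℝ)/2) = u ^ 3 := by
    rw [hu, ← Real.rpow_natCast (a ^ ((1:ℝ)/2)) 3, ← Real.rpow_mul ha]
    norm_num
  have hu5 : a ^ ((5:ℝ)/2) = u ^ 5 := by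
    rw [hu, ← Real.rpow_natCast (a ^ ((1:ℝ)/2)) 5, ← Real.rpow_mul ha]
    norm_num
  have hv5 : (a+1) ^ ((5:ℝ)/2) = v ^ 5 := by
    rw [hv, ← Real.rpow_natCast ((a+1) ^ ((1:ℝ)/2)) 5, ← Real.rpow_mul ha1]
    norm_num
  have huv : u ≤ v := by nlinarith
  rw [hu3, hu5, hv5]
  have p2 : u ^ 2 ≤ v ^ 2 := pow_le_pow_left₀ hu0 huv 2
  have p3 : u ^ 3 ≤ v ^ 3 := pow_le_pow_left₀ hu0 huv 3
  have q : (0:ℝ) ≤ v^4 + v^3*u + v^2*u^2 - (3/2)*u^3*v - (3/2)*u^4 := by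
    nlinarith [mul_nonneg hv0 (sub_nonneg.2 p3),
      mul_nonneg (mul_nonneg hu0 hv0) (sub_nonneg.2 p2),
      mul_nonneg (mul_nonneg hu0 hu0) (sub_nonneg.2 p2),
      mul_nonneg (pow_nonneg hu0 3) (sub_nonneg.2 huv)]
  have hv2' : v^2 = u^2 + 1 := by rw [hu2, hv2]
  have e : u^3 * v^2 = u^3 + u^5 := by rw [hv2']; ring
  nlinarith [mul_nonneg (sub_nonneg.2 huv) q, e]

set_option maxHeartbeats 1000000 in
/-- Summing the one-step Lyapunov recursion: final-iterate bound. -/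
theorem npg_hm_recursion_sum
    (τ₀ : ℝ) (hτ0 : 1 ≤ τ₀)
    (β : ℕ → ℝ) (hβ : ∀ s : ℕ, β s = τ₀ / (s + τ₀))
    (T : ℕ) (hT : 1 ≤ T)
    (Λ : ℕ → ℝ) (C₁ C₂ : ℝ) (hC1 : 0 ≤ C₁) (hC2 : 0 ≤ C₂)
    (hΛnonneg : ∀ t : ℕ, 1 ≤ t → t ≤ T → 0 ≤ Λ t)
    (hrec : ∀ t : ℕ, 1 ≤ t → t ≤ T - 1 →
      Λ (t + 1) ≤ (1 - 2 * β t / τ₀) * Λ t + C₁ * (β t) ^ ((3 : ℝ) / 2)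
        + C₂ * (β t) ^ ((1 : ℝ) / 2)) :
    Λ T ≤ τ₀ ^ 2 * Λ 1 / ((T : ℝ) + τ₀ - 1) ^ 2
      + (2 / 3) * C₁ * τ₀ ^ ((3 : ℝ) / 2) * ((T : ℝ) + τ₀) ^ ((3 : ℝ) / 2)
          / ((T : ℝ) + τ₀ - 1) ^ 2
      + (2 / 5) * C₂ * τ₀ ^ ((1 : ℝ) / 2) * ((T : ℝ) + τ₀) ^ ((5 : ℝ) / 2)
          / ((T : ℝ) + τ₀ - 1) ^ 2 := by
  have hτ0' : (0:ℝ) < τ₀ := by linarith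
  -- main induction
  have main : ∀ t : ℕ, 1 ≤ t → t ≤ T →
      ((t : ℝ) + τ₀ - 1) ^ 2 * Λ t ≤ τ₀ ^ 2 * Λ 1
        + (2/3) * C₁ * τ₀ ^ ((3:ℝ)/2) * ((t : ℝ) + τ₀) ^ ((3:ℝ)/2)
        + (2/5) * C₂ * τ₀ ^ ((1:ℝ)/2) * ((t : ℝ) + τ₀) ^ ((5:ℝ)/2) := by
    intro t ht
    induction t, ht using Nat.le_induction with
    | base =>
      intro _
      have h1 : (0:ℝ) ≤ 1 + τ₀ := by linarith
      have e1 : (0:ℝ) ≤ (2/3) * C₁ * τ₀ ^ ((3:ℝ)/2) * ((1 : ℝ) + τ₀) ^ ((3:ℝ)/2) := by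
        positivity
      have e2 : (0:ℝ) ≤ (2/5) * C₂ * τ₀ ^ ((1:ℝ)/2) * ((1 : ℝ) + τ₀) ^ ((5:ℝ)/2) := by
        positivity
      push_cast
      nlinarith [hΛnonneg 1 le_rfl hT]
    | succ t ht ih =>
      intro htT
      have htT' : t ≤ T := by omega
      have ih' := ih htT'
      have hx : (1:ℝ) ≤ (t:ℝ) := by exact_mod_cast ht
      set x : ℝ := (t:ℝ) + τ₀ with hxdef
      have hx0 : 0 < x := by rw [hxdef]; linarith
      have hx2 : (2:ℝ) ≤ x := by rw [hxdef]; linarith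
      have hΛt : 0 ≤ Λ t := hΛnonneg t ht htT'
      have hr := hrec t ht (by omega)
      rw [hβ t] at hr
      -- rewrite recursion in terms of x
      have hcoef : 1 - 2 * (τ₀ / ((t:ℝ) + τ₀)) / τ₀ = 1 - 2 / x := by
        rw [← hxdef]; field_simp
      rw [hcoef] at hr
      -- compute the rpow pieces
      have hdiv32 : (τ₀ / x) ^ ((3:ℝ)/2) = τ₀ ^ ((3:ℝ)/2) / x ^ ((3:ℝ)/2) :=
        Real.div_rpow (le_of_lt hτ0') (le_of_lt hx0) _
      have hdiv12 : (τ₀ / x) ^ ((1:ℝ)/2) = τ₀ ^ ((1:ℝ)/2) / x ^ ((1:ℝ)/2) :=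
        Real.div_rpow (le_of_lt hτ0') (le_of_lt hx0) _
      have hxsq : x ^ 2 = x ^ ((2:ℝ)) := by
        rw [← Real.rpow_natCast x 2]; norm_num
      have hmul32 : x ^ 2 / x ^ ((3:ℝ)/2) = x ^ ((1:ℝ)/2) := by
        rw [hxsq, ← Real.rpow_sub hx0]; norm_num
      have hmul12 : x ^ 2 / x ^ ((1:ℝ)/2) = x ^ ((3:ℝ)/2) := by
        rw [hxsq, ← Real.rpow_sub hx0]; norm_num
      -- multiply recursion by x^2
      have hstep : x ^ 2 * Λ (t+1) ≤ (x - 1) ^ 2 * Λ t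
          + C₁ * τ₀ ^ ((3:ℝ)/2) * x ^ ((1:ℝ)/2)
          + C₂ * τ₀ ^ ((1:ℝ)/2) * x ^ ((3:ℝ)/2) := by
        have h1 : x ^ 2 * Λ (t+1) ≤ x ^ 2 * ((1 - 2/x) * Λ t
            + C₁ * (τ₀ / x) ^ ((3:ℝ)/2) + C₂ * (τ₀ / x) ^ ((1:ℝ)/2)) := by
          have := sq_nonneg x
          exact mul_le_mul_of_nonneg_left hr (by positivity)
        refine h1.trans ?_
        rw [hdiv32, hdiv12, mul_add, mul_add]
        have e1 : x ^ 2 * (C₁ * (τ₀ ^ ((3:ℝ)/2) / x ^ ((3:ℝ)/2)))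
            = C₁ * τ₀ ^ ((3:ℝ)/2) * x ^ ((1:ℝ)/2) := by rw [← hmul32]; ring
        have e2 : x ^ 2 * (C₂ * (τ₀ ^ ((1:ℝ)/2) / x ^ ((1:ℝ)/2)))
            = C₂ * τ₀ ^ ((1:ℝ)/2) * x ^ ((3:ℝ)/2) := by rw [← hmul12]; ring
        have hcsq : x ^ 2 * ((1 - 2/x) * Λ t) ≤ (x - 1) ^ 2 * Λ t := by
          have h : x ^ 2 * (1 - 2/x) = x^2 - 2*x := by field_simp
          nlinarith
        rw [e1, e2]
        linarith
      -- apply increment lemmas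
      have hk32 := key32 x (le_of_lt hx0)
      have hk52 := key52 x (le_of_lt hx0)
      have hcast : ((t+1 : ℕ) : ℝ) + τ₀ = x + 1 := by push_cast; rw [hxdef]; ring
      have hgoalx : ((t+1 : ℕ) : ℝ) + τ₀ - 1 = x := by rw [hcast]; ring
      rw [hgoalx, hcast]
      have hC1' : 0 ≤ C₁ * τ₀ ^ ((3:ℝ)/2) := by positivity
      have hC2' : 0 ≤ C₂ * τ₀ ^ ((1:ℝ)/2) := by positivity
      have i1 : C₁ * τ₀ ^ ((3:ℝ)/2) * x ^ ((1:ℝ)/2)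
          ≤ (2/3) * C₁ * τ₀ ^ ((3:ℝ)/2) * ((x+1) ^ ((3:ℝ)/2) - x ^ ((3:ℝ)/2)) := by
        calc C₁ * τ₀ ^ ((3:ℝ)/2) * x ^ ((1:ℝ)/2)
            ≤ C₁ * τ₀ ^ ((3:ℝ)/2) * ((2/3) * ((x+1) ^ ((3:ℝ)/2) - x ^ ((3:ℝ)/2))) :=
              mul_le_mul_of_nonneg_left hk32 hC1'
          _ = _ := by ring
      have i2 : C₂ * τ₀ ^ ((1:ℝ)/2) * x ^ ((3:ℝ)/2)
          ≤ (2/5) * C₂ * τ₀ ^ ((1:ℝ)/2) * ((x+1) ^ ((5:ℝ)/2) - x ^ ((5:ℝ)/2)) := by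
        calc C₂ * τ₀ ^ ((1:ℝ)/2) * x ^ ((3:ℝ)/2)
            ≤ C₂ * τ₀ ^ ((1:ℝ)/2) * ((2/5) * ((x+1) ^ ((5:ℝ)/2) - x ^ ((5:ℝ)/2))) :=
              mul_le_mul_of_nonneg_left hk52 hC2'
          _ = _ := by ring
      have hxeq : (t:ℝ) + τ₀ - 1 = x - 1 := by rw [hxdef]
      rw [hxeq] at ih'
      linarith
  -- conclude
  have hfin := main T hT le_rfl
  have hd : (0:ℝ) < ((T:ℝ) + τ₀ - 1) ^ 2 := by
    have h1 : (1:ℝ) ≤ (T:ℝ) := by exact_mod_cast hT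
    have h2 : (0:ℝ) < (T:ℝ) + τ₀ - 1 := by linarith
    positivity
  rw [← add_div, ← add_div, le_div_iff₀ hd]
  linarith
end

section
/- Let M_g > 0, μ_F > 0, α₀ > 0 be real numbers, let τ₀ ≥ 20 be a real number, and let t ≥ 1 be an integer. With β_t = τ₀/(t + τ₀), α_t = α₀ β_t^{1/2}, λ_t = λ₀ β_t^{−1/2}, and λ₀ = τ₀ M_g α₀/(4 μ_F²), one has 4 M_g α_t/μ_F² + λ_t − λ_{t−1} − λ_t β_{t+1} ≤ −(M_g/(2 μ_F²)) α_t. -/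
set_option maxHeartbeats 1000000


open Real

/-- Step-size/dual-variable schedule inequality from the proof of Lemma 3. -/
theorem npg_hm_schedule_bound
    (M_g μ_F α₀ τ₀ : ℝ) (hMg : 0 < M_g) (hμF : 0 < μ_F) (hα₀ : 0 < α₀)
    (hτ0 : 20 ≤ τ₀) (t : ℕ) (ht : 1 ≤ t)
    (β : ℕ → ℝ) (hβ : ∀ s : ℕ, β s = τ₀ / (s + τ₀))
    (lam₀ : ℝ) (hlam₀ : lam₀ = τ₀ * M_g * α₀ / (4 * μ_F ^ 2))
    (α lam : ℕ → ℝ)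
    (hα : ∀ s : ℕ, α s = α₀ * (β s) ^ ((1 : ℝ) / 2))
    (hlam : ∀ s : ℕ, lam s = lam₀ * (β s) ^ (-(1 : ℝ) / 2)) :
    4 * M_g * α t / μ_F ^ 2 + lam t - lam (t - 1) - lam t * β (t + 1)
      ≤ -(M_g / (2 * μ_F ^ 2)) * α t := by
  have hτ : (0:ℝ) < τ₀ := by linarith
  have ht' : (1:ℝ) ≤ (t:ℝ) := by exact_mod_cast ht
  set x : ℝ := (t:ℝ) + τ₀ with hxdef
  have hx : 21 ≤ x := by rw [hxdef]; linarith
  have hx0 : (0:ℝ) < x := by linarith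
  have hx1 : (0:ℝ) < x - 1 := by linarith
  have hx2 : (0:ℝ) < x + 1 := by linarith
  have hβt : β t = τ₀ / x := by rw [hβ]
  have hβt1 : β (t+1) = τ₀ / (x+1) := by rw [hβ]; push_cast; rw [hxdef]; ring_nf
  have hβtm : β (t-1) = τ₀ / (x-1) := by
    rw [hβ, Nat.cast_sub ht]; push_cast; rw [hxdef]; ring_nf
  set a := Real.sqrt x with hadef
  set b := Real.sqrt (x-1) with hbdef
  set s := Real.sqrt τ₀ with hsdef
  have ha2 : a^2 = x := Real.sq_sqrt hx0.le
  have hb2 : b^2 = x - 1 := Real.sq_sqrt hx1.le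
  have hs2 : s^2 = τ₀ := Real.sq_sqrt hτ.le
  have ha0 : 0 < a := Real.sqrt_pos.mpr hx0
  have hb0 : 0 < b := Real.sqrt_pos.mpr hx1
  have hs0 : 0 < s := Real.sqrt_pos.mpr hτ
  have hba : b ≤ a := Real.sqrt_le_sqrt (by linarith)
  have hab : x - 1 ≤ a * b := by nlinarith
  have hμ2 : (0:ℝ) < μ_F ^ 2 := by positivity
  -- rewrite everything into a, b, s
  have hrt : (τ₀ / x) ^ ((1:ℝ)/2) = s / a := by
    rw [← Real.sqrt_eq_rpow, Real.sqrt_div hτ.le]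
  have hrtm : (τ₀ / (x-1)) ^ (-(1:ℝ)/2) = b / s := by
    rw [neg_div, Real.rpow_neg (by positivity), ← Real.sqrt_eq_rpow,
      Real.sqrt_div hτ.le, inv_div]
  have hrtn : (τ₀ / x) ^ (-(1:ℝ)/2) = a / s := by
    rw [neg_div, Real.rpow_neg (by positivity), ← Real.sqrt_eq_rpow,
      Real.sqrt_div hτ.le, inv_div]
  have hαt : α t = α₀ * (s / a) := by rw [hα, hβt, hrt]
  have hlamt : lam t = s^2 * M_g * α₀ / (4 * μ_F ^ 2) * (a / s) := by
    rw [hlam, hβt, hrtn, hlam₀, hs2]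
  have hlamtm : lam (t-1) = s^2 * M_g * α₀ / (4 * μ_F ^ 2) * (b / s) := by
    rw [hlam, hβtm, hrtm, hlam₀, hs2]
  have hβt1' : β (t+1) = s^2 / (a^2 + 1) := by rw [hβt1, hs2, ha2]
  rw [hαt, hlamt, hlamtm, hβt1', ← sub_nonneg]
  have hE : 0 ≤ s^2 * a^2 - (18 + a^2 - a*b) * (a^2 + 1) := by nlinarith
  have ha2p : (0:ℝ) < a^2 + 1 := by positivity
  have h : 0 ≤ M_g * α₀ / μ_F ^ 2 * (s / (4*a)) *
      ((s^2 * a^2 - (18 + a^2 - a*b) * (a^2 + 1)) / (a^2 + 1)) := by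
    apply mul_nonneg (by positivity) (div_nonneg hE ha2p.le)
  have hμ0 : μ_F ≠ 0 := ne_of_gt hμF
  have ha0' : a ≠ 0 := ne_of_gt ha0
  have hs0' : s ≠ 0 := ne_of_gt hs0
  have ha2p' : a^2 + 1 ≠ 0 := ne_of_gt ha2p
  convert h using 1
  field_simp
  ring
end

section
/- Let (Ω, ℱ, P) be a probability space and x : Ω → ℝ^d a random vector with ‖x(ω)‖² ≤ M_g almost surely, where M_g > 0. Assume the matrix F := E[x xᵀ] satisfies F ⪰ μ_F I_d for some μ_F > 0 (so F is invertible). Fix u ∈ ℝ^d, set ŵ = F⁻¹ u, and define the residual ξ(ω) = u − ⟨ŵ, x(ω)⟩ x(ω). Then E[ξ] = 0 and E[ξ ξᵀ] ⪯ (2 M_g/μ_F²) ‖u‖² F in the Loewner (positive-semidefinite) order. -/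
open Real MeasureTheory
open scoped RealInnerProductSpace Matrix

/-- Residual moment bounds for the least-squares sub-problem: the residual
`ξ = u - ⟪ŵ, x⟫ x` with `ŵ = F⁻¹ u` has mean zero and covariance bounded by
`(2 M_g / μ_F²) ‖u‖² F` in the Loewner order. -/
theorem residual_mean_zero_and_covariance_bound
    (d : ℕ) (hd : 1 ≤ d)
    (Ω : Type*) [MeasurableSpace Ω] (P : Measure Ω) [IsProbabilityMeasure P]
    (M_g μ_F : ℝ) (hMg : 0 < M_g) (hμF : 0 < μ_F)
    (x : Ω → EuclideanSpace ℝ (Fin d)) (hmeas : Measurable x)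
    (hbound : ∀ᵐ ω ∂P, ‖x ω‖ ^ 2 ≤ M_g)
    (F : Matrix (Fin d) (Fin d) ℝ)
    (hF : F = Matrix.of fun i j => ∫ ω, x ω i * x ω j ∂P)
    (hFpos : (F - μ_F • (1 : Matrix (Fin d) (Fin d) ℝ)).PosSemidef)
    (u : EuclideanSpace ℝ (Fin d))
    (what : EuclideanSpace ℝ (Fin d))
    (hwhat : ∀ i, what i = (F⁻¹).mulVec (fun j => u j) i)
    (ξ : Ω → EuclideanSpace ℝ (Fin d))
    (hξ : ∀ ω, ξ ω = u - ⟪what, x ω⟫ • x ω) :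
    (∫ ω, ξ ω ∂P) = 0
    ∧ ((2 * M_g / μ_F ^ 2 * ‖u‖ ^ 2) • F
        - Matrix.of fun i j => ∫ ω, ξ ω i * ξ ω j ∂P).PosSemidef := by
  classical
  -- basic helpers
  have normsq : ∀ a : EuclideanSpace ℝ (Fin d), ‖a‖ ^ 2 = ∑ i, (a i) ^ 2 := by
    intro a
    rw [EuclideanSpace.norm_eq, Real.sq_sqrt (by positivity)]
    simp [Real.norm_eq_abs, sq_abs]
  have hxim : ∀ i, Measurable fun ω => x ω i := fun i => (measurable_pi_apply i).comp (by have h : Measurable fun ω => WithLp.ofLp (x ω) := (MeasurableEquiv.toLp 2 (Fin d → ℝ)).symm.measurable.comp hmeas; exact h)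
  have hnx : ∀ᵐ ω ∂P, ‖x ω‖ ≤ Real.sqrt M_g := by
    filter_upwards [hbound] with ω hω
    rw [← Real.sqrt_sq (norm_nonneg (x ω))]
    exact Real.sqrt_le_sqrt hω
  have hcoord : ∀ᵐ ω ∂P, ∀ i, |x ω i| ≤ Real.sqrt M_g := by
    filter_upwards [hbound] with ω hω i
    have h1 : (x ω i) ^ 2 ≤ ∑ j, (x ω j) ^ 2 :=
      Finset.single_le_sum (f := fun j => (x ω j) ^ 2) (fun j _ => sq_nonneg _)
        (Finset.mem_univ i)
    have h2 : (x ω i) ^ 2 ≤ M_g := by rw [normsq] at hω; linarith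
    rw [← Real.sqrt_sq_eq_abs]
    exact Real.sqrt_le_sqrt h2
  have hB : 0 ≤ Real.sqrt M_g := Real.sqrt_nonneg _
  -- generic integrability from measurable + a.e. bounded
  have intg : ∀ (f : Ω → ℝ) (C : ℝ), Measurable f → (∀ᵐ ω ∂P, |f ω| ≤ C) →
      Integrable f P := by
    intro f C hf hC
    exact (integrable_const C).mono' hf.aestronglyMeasurable
      (by filter_upwards [hC] with ω hω; simpa [Real.norm_eq_abs] using hω)
  have hFint : ∀ i j, Integrable (fun ω => x ω i * x ω j) P := by
    intro i j
    refine intg _ (Real.sqrt M_g * Real.sqrt M_g) ((hxim i).mul (hxim j)) ?_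
    filter_upwards [hcoord] with ω hω
    rw [abs_mul]
    exact mul_le_mul (hω i) (hω j) (abs_nonneg _) hB
  -- symmetry of F
  have hFsymm : ∀ i j, F i j = F j i := by
    intro i j
    rw [hF]
    simp only [Matrix.of_apply]
    exact integral_congr_ae (Filter.Eventually.of_forall fun ω => mul_comm _ _)
  have hFherm : F.IsHermitian := by
    rw [Matrix.IsHermitian]
    ext i j
    simp [Matrix.conjTranspose_apply, hFsymm i j]
  -- F is positive definite, hence invertible
  have hdotself : ∀ v : Fin d → ℝ, dotProduct v v = ∑ i, (v i) ^ 2 := by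
    intro v
    simp [dotProduct, sq]
  have hFposdef : F.PosDef := by
    refine Matrix.PosDef.of_dotProduct_mulVec_pos hFherm fun v hv => ?_
    have h0 := hFpos.dotProduct_mulVec_nonneg v
    have h1 : (F - μ_F • (1 : Matrix (Fin d) (Fin d) ℝ)) *ᵥ v = F *ᵥ v - μ_F • v := by
      rw [Matrix.sub_mulVec, Matrix.smul_mulVec, Matrix.one_mulVec]
    rw [star_trivial, h1, dotProduct_sub, dotProduct_smul, smul_eq_mul] at h0
    have h2 : 0 < dotProduct v v := by
      rw [hdotself]
      rcases Function.ne_iff.1 hv with ⟨i, hi⟩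
      have : 0 < (v i) ^ 2 := lt_of_le_of_ne (sq_nonneg _) (Ne.symm (pow_ne_zero 2 hi))
      have hle : (v i) ^ 2 ≤ ∑ j, (v j) ^ 2 :=
        Finset.single_le_sum (f := fun j => (v j) ^ 2) (fun j _ => sq_nonneg _)
          (Finset.mem_univ i)
      linarith
    rw [star_trivial]
    nlinarith [mul_pos hμF h2]
  have hdet : IsUnit F.det := hFposdef.det_pos.ne'.isUnit
  have hFw : F *ᵥ (fun j => what j) = (fun j => u j) := by
    have hw : (fun j => what j) = F⁻¹ *ᵥ (fun j => u j) := funext hwhat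
    rw [hw, Matrix.mulVec_mulVec, Matrix.mul_nonsing_inv F hdet, Matrix.one_mulVec]
  -- the scalar coefficient ⟪what, x ω⟫ as a sum
  set iw : Ω → ℝ := fun ω => ∑ j, what j * x ω j with hiw_def
  have hin : ∀ ω, (⟪what, x ω⟫ : ℝ) = iw ω := by
    intro ω; simp [hiw_def, PiLp.inner_apply, mul_comm]
  have hiwm : Measurable iw :=
    Finset.measurable_sum _ fun j _ => measurable_const.mul (hxim j)
  have hiwb : ∀ᵐ ω ∂P, |iw ω| ≤ ‖what‖ * Real.sqrt M_g := by
    filter_upwards [hnx] with ω hω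
    rw [← hin ω]
    calc |(⟪what, x ω⟫ : ℝ)| ≤ ‖what‖ * ‖x ω‖ := abs_real_inner_le_norm _ _
      _ ≤ ‖what‖ * Real.sqrt M_g := by
          exact mul_le_mul_of_nonneg_left hω (norm_nonneg _)
  -- integrability of iw * xᵢ and the key identity ∫ iw * xᵢ = uᵢ
  have hiwx_eq : ∀ i, (fun ω => iw ω * x ω i) = fun ω => ∑ j, what j * (x ω j * x ω i) := by
    intro i
    funext ω
    rw [hiw_def]
    simp only []
    rw [Finset.sum_mul]
    exact Finset.sum_congr rfl fun j _ => by ring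
  have hiwxint : ∀ i, Integrable (fun ω => iw ω * x ω i) P := by
    intro i
    rw [hiwx_eq i]
    exact integrable_finset_sum _ fun j _ => (hFint j i).const_mul _
  have hFentry : ∀ i j, (∫ ω, x ω i * x ω j ∂P) = F i j := by
    intro i j; rw [hF]; rfl
  have key : ∀ i, ∫ ω, iw ω * x ω i ∂P = u i := by
    intro i
    rw [hiwx_eq i]
    rw [integral_finset_sum _ (fun j _ => (hFint j i).const_mul _)]
    have h1 : ∀ j, ∫ ω, what j * (x ω j * x ω i) ∂P = what j * F j i := by
      intro j; rw [integral_const_mul, hFentry j i]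
    simp_rw [h1]
    have h2 : ∑ j, what j * F j i = (F *ᵥ fun j => what j) i := by
      simp only [Matrix.mulVec, dotProduct]
      exact Finset.sum_congr rfl fun j _ => by rw [hFsymm i j]; ring
    rw [h2, hFw]
  -- coordinates of ξ
  have hξi : ∀ ω i, ξ ω i = u i - iw ω * x ω i := by
    intro ω i
    rw [hξ ω, hin ω]
    simp [PiLp.sub_apply, PiLp.smul_apply, smul_eq_mul]
  have hξim : ∀ i, Measurable fun ω => ξ ω i := by
    intro i
    have : (fun ω => ξ ω i) = fun ω => u i - iw ω * x ω i := funext fun ω => hξi ω i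
    rw [this]
    exact measurable_const.sub (hiwm.mul (hxim i))
  have hξib : ∀ᵐ ω ∂P, ∀ i, |ξ ω i| ≤ |u i| + ‖what‖ * Real.sqrt M_g * Real.sqrt M_g := by
    filter_upwards [hiwb, hcoord] with ω h1 h2 i
    rw [hξi ω i]
    calc |u i - iw ω * x ω i| ≤ |u i| + |iw ω * x ω i| := abs_sub _ _
      _ ≤ |u i| + ‖what‖ * Real.sqrt M_g * Real.sqrt M_g := by
          rw [abs_mul]
          have : |iw ω| * |x ω i| ≤ (‖what‖ * Real.sqrt M_g) * Real.sqrt M_g :=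
            mul_le_mul h1 (h2 i) (abs_nonneg _) (by positivity)
          linarith
  have hξiint : ∀ i, Integrable (fun ω => ξ ω i) P := by
    intro i
    refine intg _ (|u i| + ‖what‖ * Real.sqrt M_g * Real.sqrt M_g) (hξim i) ?_
    filter_upwards [hξib] with ω hω
    exact hω i
  have hmean0 : ∀ i, ∫ ω, ξ ω i ∂P = 0 := by
    intro i
    have heq : (fun ω => ξ ω i) = fun ω => u i - iw ω * x ω i := funext fun ω => hξi ω i
    rw [heq, integral_sub (integrable_const _) (hiwxint i), integral_const, key i]
    simp
  -- Bochner integrability of ξ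
  have hmξ : Measurable ξ := by
    apply (MeasurableEquiv.toLp 2 (Fin d → ℝ)).measurable.comp (measurable_pi_lambda _ ?_)
    intro i
    exact hξim i
  have hξBint : Integrable ξ P := by
    refine (integrable_const (‖u‖ + ‖what‖ * M_g)).mono' hmξ.aestronglyMeasurable ?_
    filter_upwards [hbound] with ω hω
    rw [hξ ω]
    calc ‖u - (⟪what, x ω⟫ : ℝ) • x ω‖ ≤ ‖u‖ + ‖(⟪what, x ω⟫ : ℝ) • x ω‖ := norm_sub_le _ _
      _ = ‖u‖ + |(⟪what, x ω⟫ : ℝ)| * ‖x ω‖ := by rw [norm_smul, Real.norm_eq_abs]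
      _ ≤ ‖u‖ + ‖what‖ * M_g := by
          have h1 : |(⟪what, x ω⟫ : ℝ)| ≤ ‖what‖ * ‖x ω‖ := abs_real_inner_le_norm _ _
          have h2 : |(⟪what, x ω⟫ : ℝ)| * ‖x ω‖ ≤ ‖what‖ * ‖x ω‖ * ‖x ω‖ :=
            mul_le_mul_of_nonneg_right h1 (norm_nonneg _)
          nlinarith [norm_nonneg (x ω), norm_nonneg what, abs_nonneg (⟪what, x ω⟫ : ℝ)]
  have hmeanvec : (∫ ω, ξ ω ∂P) = 0 := by
    ext i
    have h := (EuclideanSpace.proj (𝕜 := ℝ) i).integral_comp_comm hξBint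
    simp only [PiLp.proj_apply] at h
    rw [← h, hmean0 i]
    simp
  refine ⟨hmeanvec, ?_⟩
  -- covariance part
  have hXiint2 : ∀ i j, Integrable (fun ω => ξ ω i * ξ ω j) P := by
    intro i j
    refine intg _ ((|u i| + ‖what‖ * Real.sqrt M_g * Real.sqrt M_g) *
      (|u j| + ‖what‖ * Real.sqrt M_g * Real.sqrt M_g)) ((hξim i).mul (hξim j)) ?_
    filter_upwards [hξib] with ω hω
    rw [abs_mul]
    exact mul_le_mul (hω i) (hω j) (abs_nonneg _)
      (le_trans (abs_nonneg _) (hω i))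
  have hXisymm : ∀ i j, (∫ ω, ξ ω i * ξ ω j ∂P) = ∫ ω, ξ ω j * ξ ω i ∂P := by
    intro i j
    exact integral_congr_ae (Filter.Eventually.of_forall fun ω => mul_comm _ _)
  -- quadratic form computations
  have hdot : ∀ (M : Matrix (Fin d) (Fin d) ℝ) (v : Fin d → ℝ),
      dotProduct v (M *ᵥ v) = ∑ i, ∑ j, v i * v j * M i j := by
    intro M v
    simp only [dotProduct, Matrix.mulVec, Finset.mul_sum]
    exact Finset.sum_congr rfl fun i _ => Finset.sum_congr rfl fun j _ => by ring
  have hquad : ∀ (v : Fin d → ℝ) (y : Ω → EuclideanSpace ℝ (Fin d)),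
      (∀ i j, Integrable (fun ω => y ω i * y ω j) P) →
      ∑ i, ∑ j, v i * v j * (∫ ω, y ω i * y ω j ∂P)
        = ∫ ω, (∑ i, v i * y ω i) ^ 2 ∂P := by
    intro v y hyint
    have h1 : ∀ i j, v i * v j * (∫ ω, y ω i * y ω j ∂P)
        = ∫ ω, v i * v j * (y ω i * y ω j) ∂P := fun i j => (integral_const_mul _ _).symm
    simp_rw [h1]
    have h2 : ∀ i, ∑ j, ∫ ω, v i * v j * (y ω i * y ω j) ∂P
        = ∫ ω, ∑ j, v i * v j * (y ω i * y ω j) ∂P :=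
      fun i => (integral_finset_sum _ fun j _ => (hyint i j).const_mul _).symm
    simp_rw [h2]
    rw [← integral_finset_sum _
      (fun i _ => integrable_finset_sum _ fun j _ => (hyint i j).const_mul _)]
    congr 1
    funext ω
    rw [sq, Finset.sum_mul_sum]
    exact Finset.sum_congr rfl fun i _ => Finset.sum_congr rfl fun j _ => by ring
  -- norm bound for what
  have hwle : ‖what‖ ≤ ‖u‖ / μ_F := by
    have hpos := hFpos.dotProduct_mulVec_nonneg (fun j => what j)
    rw [star_trivial] at hpos
    have h1 : (F - μ_F • (1 : Matrix (Fin d) (Fin d) ℝ)) *ᵥ (fun j => what j)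
        = (fun j => u j) - μ_F • (fun j => what j) := by
      rw [Matrix.sub_mulVec, hFw, Matrix.smul_mulVec, Matrix.one_mulVec]
    rw [h1, dotProduct_sub, dotProduct_smul, smul_eq_mul] at hpos
    have h2 : dotProduct (fun j => what j) (fun j => what j) = ‖what‖ ^ 2 := by
      rw [hdotself, normsq]
    have h3 : dotProduct (fun j => what j) (fun j => u j) ≤ ‖what‖ * ‖u‖ := by
      have hle := real_inner_le_norm what u
      have hinu : (⟪what, u⟫ : ℝ) = dotProduct (fun j => what j) (fun j => u j) := by
        simp [PiLp.inner_apply, dotProduct, mul_comm]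
      linarith [hinu ▸ hle]
    rw [h2] at hpos
    have hkey : μ_F * ‖what‖ ^ 2 ≤ ‖what‖ * ‖u‖ := by linarith
    rcases eq_or_lt_of_le (norm_nonneg what) with h0 | h0
    · rw [← h0]; positivity
    · rw [le_div_iff₀ hμF]; nlinarith
  have hw2 : M_g * ‖what‖ ^ 2 ≤ M_g / μ_F ^ 2 * ‖u‖ ^ 2 := by
    have h1 : ‖what‖ ^ 2 ≤ (‖u‖ / μ_F) ^ 2 := by
      have := pow_le_pow_left₀ (norm_nonneg what) hwle 2
      exact this
    have h2 : M_g * ‖what‖ ^ 2 ≤ M_g * (‖u‖ / μ_F) ^ 2 :=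
      mul_le_mul_of_nonneg_left h1 hMg.le
    calc M_g * ‖what‖ ^ 2 ≤ M_g * (‖u‖ / μ_F) ^ 2 := h2
      _ = M_g / μ_F ^ 2 * ‖u‖ ^ 2 := by rw [div_pow]; ring
  refine Matrix.PosSemidef.of_dotProduct_mulVec_nonneg ?_ ?_
  · -- Hermitian
    rw [Matrix.IsHermitian]
    ext i j
    simp only [Matrix.conjTranspose_apply, Matrix.sub_apply, Matrix.smul_apply,
      Matrix.of_apply, smul_eq_mul, star_trivial]
    rw [hFsymm j i, hXisymm j i]
  · -- quadratic form nonnegativity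
    intro v
    rw [star_trivial, Matrix.sub_mulVec, dotProduct_sub, Matrix.smul_mulVec,
      dotProduct_smul, smul_eq_mul]
    have hQF : dotProduct v (F *ᵥ v) = ∫ ω, (∑ i, v i * x ω i) ^ 2 ∂P := by
      rw [hdot]
      have : ∀ i j, F i j = ∫ ω, x ω i * x ω j ∂P := fun i j => (hFentry i j).symm
      simp_rw [this]
      exact hquad v x hFint
    have hQXi : dotProduct v
        ((Matrix.of fun i j => ∫ ω, ξ ω i * ξ ω j ∂P) *ᵥ v)
        = ∫ ω, (∑ i, v i * ξ ω i) ^ 2 ∂P := by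
      rw [hdot]
      simp only [Matrix.of_apply]
      exact hquad v ξ hXiint2
    rw [hQF, hQXi]
    -- scalar setup
    set s : Ω → ℝ := fun ω => ∑ i, v i * x ω i with hs_def
    set c : ℝ := ∑ i, v i * u i with hc_def
    have hsm : Measurable s := Finset.measurable_sum _ fun i _ => measurable_const.mul (hxim i)
    have hsb : ∀ᵐ ω ∂P, |s ω| ≤ (∑ i, |v i|) * Real.sqrt M_g := by
      filter_upwards [hcoord] with ω hω
      calc |s ω| ≤ ∑ i, |v i * x ω i| := Finset.abs_sum_le_sum_abs _ _
        _ ≤ ∑ i, |v i| * Real.sqrt M_g := by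
            refine Finset.sum_le_sum fun i _ => ?_
            rw [abs_mul]
            exact mul_le_mul_of_nonneg_left (hω i) (abs_nonneg _)
        _ = (∑ i, |v i|) * Real.sqrt M_g := by rw [Finset.sum_mul]
    -- t = c - iw * s pointwise
    have ht : ∀ ω, (∑ i, v i * ξ ω i) = c - iw ω * s ω := by
      intro ω
      have h1 : ∀ i, v i * ξ ω i = v i * u i - iw ω * (v i * x ω i) := by
        intro i; rw [hξi ω i]; ring
      simp_rw [h1]
      rw [Finset.sum_sub_distrib, ← Finset.mul_sum]
    -- integrabilities for the scalar quantities
    have hsint2 : Integrable (fun ω => s ω ^ 2) P := by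
      refine intg _ (((∑ i, |v i|) * Real.sqrt M_g) ^ 2) (hsm.pow_const 2) ?_
      filter_upwards [hsb] with ω hω
      rw [abs_pow]
      exact pow_le_pow_left₀ (abs_nonneg _) hω 2
    have hiwsm : Measurable fun ω => iw ω * s ω := hiwm.mul hsm
    have hiwsb : ∀ᵐ ω ∂P, |iw ω * s ω|
        ≤ (‖what‖ * Real.sqrt M_g) * ((∑ i, |v i|) * Real.sqrt M_g) := by
      filter_upwards [hiwb, hsb] with ω h1 h2
      rw [abs_mul]
      exact mul_le_mul h1 h2 (abs_nonneg _) (by positivity)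
    have hiwsint : Integrable (fun ω => iw ω * s ω) P :=
      intg _ _ hiwsm hiwsb
    have hiws2int : Integrable (fun ω => (iw ω * s ω) ^ 2) P := by
      refine intg _ (((‖what‖ * Real.sqrt M_g) * ((∑ i, |v i|) * Real.sqrt M_g)) ^ 2)
        (hiwsm.pow_const 2) ?_
      filter_upwards [hiwsb] with ω hω
      rw [abs_pow]
      exact pow_le_pow_left₀ (abs_nonneg _) hω 2
    have hcross : ∫ ω, iw ω * s ω ∂P = c := by
      have h1 : (fun ω => iw ω * s ω) = fun ω => ∑ i, v i * (iw ω * x ω i) := by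
        funext ω
        rw [hs_def]
        simp only []
        rw [Finset.mul_sum]
        exact Finset.sum_congr rfl fun i _ => by ring
      rw [h1, integral_finset_sum _ (fun i _ => (hiwxint i).const_mul _)]
      have h2 : ∀ i, ∫ ω, v i * (iw ω * x ω i) ∂P = v i * u i := by
        intro i; rw [integral_const_mul, key i]
      simp_rw [h2]
      rfl
    -- identity for the residual quadratic integral
    have hT : ∫ ω, (∑ i, v i * ξ ω i) ^ 2 ∂P
        = (∫ ω, (iw ω * s ω) ^ 2 ∂P) - c ^ 2 := by
      have h1 : (fun ω => (∑ i, v i * ξ ω i) ^ 2)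
          = fun ω => ((iw ω * s ω) ^ 2 - (2 * c) * (iw ω * s ω)) + c ^ 2 := by
        funext ω; rw [ht ω]; ring
      have hint2 : Integrable (fun ω => (2 * c) * (iw ω * s ω)) P := hiwsint.const_mul _
      have hint1 : Integrable (fun ω => (iw ω * s ω) ^ 2 - (2 * c) * (iw ω * s ω)) P :=
        hiws2int.sub hint2
      rw [h1, integral_add hint1 (integrable_const _),
        integral_sub hiws2int hint2, integral_const_mul, hcross,
        integral_const]
      simp only [measure_univ, ENNReal.toReal_one, probReal_univ, smul_eq_mul, one_mul]
      ring
    -- pointwise domination of (iw*s)^2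
    have hptb : ∀ᵐ ω ∂P, (iw ω * s ω) ^ 2 ≤ (M_g * ‖what‖ ^ 2) * s ω ^ 2 := by
      filter_upwards [hiwb] with ω hω
      have h1 : (iw ω) ^ 2 ≤ (‖what‖ * Real.sqrt M_g) ^ 2 := by
        rw [← sq_abs (iw ω)]
        exact pow_le_pow_left₀ (abs_nonneg _) hω 2
      have h2 : (‖what‖ * Real.sqrt M_g) ^ 2 = M_g * ‖what‖ ^ 2 := by
        rw [mul_pow, Real.sq_sqrt hMg.le]; ring
      calc (iw ω * s ω) ^ 2 = (iw ω) ^ 2 * (s ω) ^ 2 := by ring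
        _ ≤ (‖what‖ * Real.sqrt M_g) ^ 2 * (s ω) ^ 2 :=
            mul_le_mul_of_nonneg_right h1 (sq_nonneg _)
        _ = (M_g * ‖what‖ ^ 2) * s ω ^ 2 := by rw [h2]
    have hmono : ∫ ω, (iw ω * s ω) ^ 2 ∂P ≤ ∫ ω, (M_g * ‖what‖ ^ 2) * s ω ^ 2 ∂P :=
      integral_mono_ae hiws2int (hsint2.const_mul _) hptb
    rw [integral_const_mul] at hmono
    have hA0 : 0 ≤ ∫ ω, s ω ^ 2 ∂P := integral_nonneg fun ω => sq_nonneg _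
    have hfin : ∫ ω, (∑ i, v i * ξ ω i) ^ 2 ∂P
        ≤ (M_g / μ_F ^ 2 * ‖u‖ ^ 2) * ∫ ω, s ω ^ 2 ∂P := by
      rw [hT]
      have h1 := mul_le_mul_of_nonneg_right hw2 hA0
      nlinarith [sq_nonneg c]
    have hX0 : 0 ≤ (M_g / μ_F ^ 2 * ‖u‖ ^ 2) * ∫ ω, s ω ^ 2 ∂P :=
      mul_nonneg (by positivity) hA0
    have e1 : (∫ ω, (∑ i, v i * x ω i) ^ 2 ∂P) = ∫ ω, s ω ^ 2 ∂P := by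
      apply integral_congr_ae
      filter_upwards with ω
      rw [hs_def]
    rw [e1]
    set A : ℝ := ∫ ω, s ω ^ 2 ∂P with hA_def
    set T : ℝ := ∫ ω, (∑ i, v i * ξ ω i) ^ 2 ∂P with hT_def
    have h2 : 2 * M_g / μ_F ^ 2 * ‖u‖ ^ 2 * A = 2 * (M_g / μ_F ^ 2 * ‖u‖ ^ 2 * A) := by ring
    rw [h2]
    linarith [hfin, hX0]
end
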